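/- Collective application of the reduction criterion on two pairs: let ρ₁, ρ₂ be states on ℂ^d ⊗ ℂ^d and suppose there are vectors ψ₁, ψ₂ : Fin d × Fin d → ℂ with Re⟨ψ_m, ((ρ_m)_A⊗I − ρ_m)·ψ_m⟩ < 0 for m = 1, 2 (violations of the reduction criterion on each copy). Then the product vector Ψ = ψ₁⊗ψ₂, with Ψ(x,y) = ψ₁(x)·ψ₂(y), satisfies Re⟨Ψ, [ ((ρ₁)_A⊗I) ⊗ ((ρ₂)_A⊗I) − ρ₁⊗ρ₂ ]·Ψ⟩ < 0; i.e. violation of the reduction criterion on single copies yields a violation of the two-copy reduction criterion on a product vector. -/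

import Mathlib

open Matrix Kronecker BigOperators
open scoped ComplexOrder

noncomputable section

/-- `d × d` complex matrices. -/
abbrev Mat (d : ℕ) := Matrix (Fin d) (Fin d) ℂ

/-- Matrices on `ℂ^d ⊗ ℂ^d`, indexed by `Fin d × Fin d`. -/
abbrev Mat2 (d : ℕ) := Matrix (Fin d × Fin d) (Fin d × Fin d) ℂ

/-- Partial transpose on Bob's system: `(M^{T_B})_{(i,k),(j,l)} = M_{(i,l),(j,k)}`. -/
def ptB {d : ℕ} (M : Mat2 d) : Mat2 d :=
  Matrix.of fun p q => M (p.1, q.2) (q.1, p.2)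

/-- Schmidt rank of a vector `ψ : Fin d × Fin d → ℂ`: the rank of the `d × d`
matrix with `(i,j)` entry `ψ (i,j)`. -/
def schmidtRank {d : ℕ} (ψ : Fin d × Fin d → ℂ) : ℕ :=
  (Matrix.of fun i j => ψ (i, j) : Mat d).rank

/-- A state: positive semidefinite with trace one. -/
def IsState {d : ℕ} (ρ : Mat2 d) : Prop := ρ.PosSemidef ∧ ρ.trace = 1

/-- One-distillability: some Schmidt-rank-≤2 vector has negative expectation on `ρ^{T_B}`. -/
def OneDistillable {d : ℕ} (ρ : Mat2 d) : Prop :=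
  ∃ ψ : Fin d × Fin d → ℂ, schmidtRank ψ ≤ 2 ∧
    (star ψ ⬝ᵥ (ptB ρ).mulVec ψ).re < 0

/-- The rank-one matrix `|ψ⟩⟨ψ|`, with entries `ψ x * conj (ψ y)`. -/
def outer {d : ℕ} (ψ : Fin d × Fin d → ℂ) : Mat2 d :=
  Matrix.vecMulVec ψ (star ψ)

/-- The maximally entangled projector `P₊`, `(P₊)_{(i,k),(j,l)} = (1/d)·δ_{ik}·δ_{jl}`. -/
def Pplus (d : ℕ) : Mat2 d :=
  Matrix.of fun p q =>
    ((if p.1 = p.2 then (1 : ℂ) else 0) * (if q.1 = q.2 then (1 : ℂ) else 0)) / d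

/-- The flip operator `V_{(i,k),(j,l)} = δ_{il}·δ_{jk}`. -/
def flipOp (d : ℕ) : Mat2 d :=
  Matrix.of fun p q => if p.1 = q.2 ∧ q.1 = p.2 then (1 : ℂ) else 0

/-- The operator `Z = Σ_i |ii⟩⟨ii|`, `Z_{(i,k),(j,l)} = δ_{ik}·δ_{jl}·δ_{ij}`. -/
def Zop (d : ℕ) : Mat2 d :=
  Matrix.of fun p q => if p.1 = p.2 ∧ q.1 = q.2 ∧ p.1 = q.1 then (1 : ℂ) else 0

/-- Partial trace over Alice: `(Tr_A M)_{k,l} = Σ_i M_{(i,k),(i,l)}`. -/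
def trA {d : ℕ} (M : Mat2 d) : Mat d :=
  Matrix.of fun k l => ∑ i, M (i, k) (i, l)

/-- Alice's reduced state: `(ρ_A)_{i,j} = Σ_k ρ_{(i,k),(j,k)}`. -/
def redA {d : ℕ} (ρ : Mat2 d) : Mat d :=
  Matrix.of fun i j => ∑ k, ρ (i, k) (j, k)

/-- Bob's reduced state: `(ρ_B)_{k,l} = Σ_i ρ_{(i,k),(i,l)}`. -/
def redB {d : ℕ} (ρ : Mat2 d) : Mat d := trA ρ

/-- `(1 ⊗ Λ)(M)`, acting with `Λ` on Bob's blocks. -/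
def idTensor {d : ℕ} (Λ : Mat d → Mat d) (M : Mat2 d) : Mat2 d :=
  Matrix.of fun p q => Λ (Matrix.of fun k l => M (p.1, k) (q.1, l)) p.2 q.2

/-- `(Λ ⊗ 1)(M)`, acting with `Λ` on Alice's blocks. -/
def tensorId {d : ℕ} (Λ : Mat d → Mat d) (M : Mat2 d) : Mat2 d :=
  Matrix.of fun p q => Λ (Matrix.of fun i j => M (i, p.2) (j, q.2)) p.1 q.1

/-- `(1_k ⊗ Λ)(M)` for `M` indexed by `Fin k × Fin d`. -/
def idTensorK {d : ℕ} (k : ℕ) (Λ : Mat d → Mat d)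
    (M : Matrix (Fin k × Fin d) (Fin k × Fin d) ℂ) :
    Matrix (Fin k × Fin d) (Fin k × Fin d) ℂ :=
  Matrix.of fun p q => Λ (Matrix.of fun m n => M (p.1, m) (q.1, n)) p.2 q.2

/-- Two-decomposable maps: `Λ(X) = Σᵢ Vᵢ · Xᵀ · Vᵢ†` with each `Vᵢ` of rank at most 2. -/
def TwoDecomposable {d : ℕ} (Λ : Mat d → Mat d) : Prop :=
  ∃ (n : ℕ) (V : Fin n → Mat d), (∀ i, (V i).rank ≤ 2) ∧
    ∀ X : Mat d, Λ X = ∑ i, V i * Xᵀ * (V i)ᴴ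

/-- The diagonal part of a matrix (off-diagonal entries set to zero). -/
def diagPart {d : ℕ} (X : Mat d) : Mat d := Matrix.diagonal fun i => X i i


lemma kron_quad {n m : Type*} [Fintype n] [Fintype m] (M : Matrix n n ℂ) (N : Matrix m m ℂ)
    (φ : n → ℂ) (χ : m → ℂ) :
    star (fun xy : n × m => φ xy.1 * χ xy.2) ⬝ᵥ
      (M ⊗ₖ N).mulVec (fun xy : n × m => φ xy.1 * χ xy.2)
    = (star φ ⬝ᵥ M.mulVec φ) * (star χ ⬝ᵥ N.mulVec χ) := by
  simp only [dotProduct, mulVec, kroneckerMap_apply, Fintype.sum_prod_type,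
    Finset.sum_mul, Finset.mul_sum, Pi.star_apply, star_mul']
  conv_rhs => enter [2, x]; rw [Finset.sum_comm]
  conv_rhs => rw [Finset.sum_comm]
  conv_rhs => enter [2, a, 2, b]; rw [Finset.sum_comm]
  exact Finset.sum_congr rfl fun a _ => Finset.sum_congr rfl fun b _ =>
    Finset.sum_congr rfl fun c _ => Finset.sum_congr rfl fun e _ => by ring

lemma redA_kron_one_quad {d : ℕ} (ρ : Mat2 d) (ψ : Fin d × Fin d → ℂ) :
    star ψ ⬝ᵥ (redA ρ ⊗ₖ (1 : Mat d)).mulVec ψ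
    = ∑ k, ∑ m, star (fun p : Fin d × Fin d => if p.2 = m then ψ (p.1, k) else 0) ⬝ᵥ
        ρ.mulVec (fun p : Fin d × Fin d => if p.2 = m then ψ (p.1, k) else 0) := by
  simp only [dotProduct, mulVec, kroneckerMap_apply, Fintype.sum_prod_type,
    redA, Matrix.of_apply, Matrix.one_apply, Pi.star_apply, star_zero,
    mul_ite, ite_mul, mul_zero, zero_mul, Finset.sum_ite_eq, Finset.sum_ite_eq',
    Finset.mem_univ, if_true, Finset.mul_sum, Finset.sum_mul, apply_ite (star : ℂ → ℂ)]
  conv_rhs => enter [2, x, 2, x1, 2, x2]; rw [Finset.sum_comm]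
  simp only [Finset.sum_ite_eq', Finset.mem_univ, if_true]
  conv_rhs => enter [2, x]; rw [Finset.sum_comm]
  conv_rhs => rw [Finset.sum_comm]
  conv_rhs => enter [2, a, 2, b]; rw [Finset.sum_comm]
  exact Finset.sum_congr rfl fun a _ => Finset.sum_congr rfl fun b _ =>
    Finset.sum_congr rfl fun c _ => Finset.sum_congr rfl fun e _ => by ring

/-- single-copy violations of the reduction criterion combine to a
two-copy violation on the product vector. -/
theorem reduction_violation_two_copies (d : ℕ) (hd : 2 ≤ d) (ρ₁ ρ₂ : Mat2 d)
    (h₁ : IsState ρ₁) (h₂ : IsState ρ₂)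
    (ψ₁ ψ₂ : Fin d × Fin d → ℂ)
    (hv₁ : (star ψ₁ ⬝ᵥ (redA ρ₁ ⊗ₖ (1 : Mat d) - ρ₁).mulVec ψ₁).re < 0)
    (hv₂ : (star ψ₂ ⬝ᵥ (redA ρ₂ ⊗ₖ (1 : Mat d) - ρ₂).mulVec ψ₂).re < 0) :
    (star (fun xy : (Fin d × Fin d) × (Fin d × Fin d) => ψ₁ xy.1 * ψ₂ xy.2) ⬝ᵥ
        ((redA ρ₁ ⊗ₖ (1 : Mat d)) ⊗ₖ (redA ρ₂ ⊗ₖ (1 : Mat d)) - ρ₁ ⊗ₖ ρ₂).mulVec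
          (fun xy : (Fin d × Fin d) × (Fin d × Fin d) => ψ₁ xy.1 * ψ₂ xy.2)).re
      < 0 := by
  have hA₁ : 0 ≤ star ψ₁ ⬝ᵥ (redA ρ₁ ⊗ₖ (1 : Mat d)).mulVec ψ₁ := by
    rw [redA_kron_one_quad]
    exact Finset.sum_nonneg fun k _ => Finset.sum_nonneg fun m _ => h₁.1.dotProduct_mulVec_nonneg _
  have hA₂ : 0 ≤ star ψ₂ ⬝ᵥ (redA ρ₂ ⊗ₖ (1 : Mat d)).mulVec ψ₂ := by
    rw [redA_kron_one_quad]
    exact Finset.sum_nonneg fun k _ => Finset.sum_nonneg fun m _ => h₂.1.dotProduct_mulVec_nonneg _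
  have hB₁ : 0 ≤ star ψ₁ ⬝ᵥ ρ₁.mulVec ψ₁ := h₁.1.dotProduct_mulVec_nonneg _
  have hB₂ : 0 ≤ star ψ₂ ⬝ᵥ ρ₂.mulVec ψ₂ := h₂.1.dotProduct_mulVec_nonneg _
  rw [Complex.le_def] at hA₁ hA₂ hB₁ hB₂
  simp only [Complex.zero_re, Complex.zero_im] at hA₁ hA₂ hB₁ hB₂
  rw [Matrix.sub_mulVec, dotProduct_sub, Complex.sub_re] at hv₁ hv₂ ⊢
  rw [kron_quad, kron_quad, Complex.mul_re, Complex.mul_re]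
  rw [← hA₁.2, ← hA₂.2, ← hB₁.2, ← hB₂.2]
  simp only [mul_zero, sub_zero]
  nlinarith [hA₁.1, hA₂.1, hB₁.1, hB₂.1]
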